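/- arXiv:0904.0039 — 2 statements merged into one kernel-verified Lean document; each statement's English description precedes it below -/
import Mathlib

section
/- A stable curve of compact type has at most one central component, i.e. at most one irreducible component X such that every connected component Z of the closure of the complement of X satisfies g_Z < g_C/2. -/
open Finset

/-- An abstract (combinatorial) model of a nodal curve: a finite set of irreducible
components `V` (with geometric genus `w v`), and a finite set of nodes `N`, each node
lying on the (unordered pair of) components recorded by `ends`. -/
structure NodalCurve where
  V : Type
  N : Type
  [instFV : Fintype V]
  [instDV : DecidableEq V]
  [instFN : Fintype N]
  [instDN : DecidableEq N]
  ends : N → Sym2 V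
  w : V → ℕ

namespace NodalCurve

variable (C : NodalCurve)

instance : Fintype C.V := C.instFV
instance : DecidableEq C.V := C.instDV
instance : Fintype C.N := C.instFN
instance : DecidableEq C.N := C.instDN

/-- The dual graph of the curve (as a simple graph on the components). -/
def graph : SimpleGraph C.V :=
  SimpleGraph.fromRel (fun u v => ∃ n, C.ends n = s(u, v))

/-- The number of branches (ends) of the node `n` lying on the subcurve `S`. -/
def endsIn (S : Finset C.V) (n : C.N) : ℕ :=
  Sym2.lift ⟨fun a b => (if a ∈ S then 1 else 0) + (if b ∈ S then 1 else 0),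
    fun _ _ => add_comm _ _⟩ (C.ends n)

/-- `k S = #(Y ∩ Y')`: the number of nodes where the subcurve `S` meets its complement. -/
def k (S : Finset C.V) : ℕ := (univ.filter fun n => C.endsIn S n = 1).card

/-- nodes both of whose branches lie on `S`. -/
def internalNodes (S : Finset C.V) : ℕ := (univ.filter fun n => C.endsIn S n = 2).card

/-- The (arithmetic) genus of the curve. -/
def genus : ℤ :=
  ∑ v, (C.w v : ℤ) + (Fintype.card C.N : ℤ) - (Fintype.card C.V : ℤ) + 1

/-- The genus `1 - χ(O_Y)` of a (connected) subcurve with components `S`. -/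
def genusSub (S : Finset C.V) : ℤ :=
  ∑ v ∈ S, (C.w v : ℤ) + (C.internalNodes S : ℤ) - (S.card : ℤ) + 1

/-- `χ(O_Y)` for the subcurve `Y` with components `S`. -/
def chiO (S : Finset C.V) : ℤ :=
  (S.card : ℤ) - ∑ v ∈ S, (C.w v : ℤ) - (C.internalNodes S : ℤ)

/-- The degree of `ω_C` restricted to the subcurve with components `S`. -/
def degω (S : Finset C.V) : ℤ :=
  ∑ v ∈ S, (2 * (C.w v : ℤ) - 2) + ∑ n, (C.endsIn S n : ℤ)

/-- Connectedness of the subcurve with components `S`. -/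
def connectedSub (S : Finset C.V) : Prop := (C.graph.induce (S : Set C.V)).Connected

/-- Connectedness of the curve. -/
def Conn : Prop := C.graph.Connected

/-- The curve is of compact type: every node is separating, i.e. the dual graph
(with its multiple edges and loops) is a tree. -/
def CompactType : Prop :=
  Function.Injective C.ends ∧ (∀ n, ¬ (C.ends n).IsDiag) ∧ C.graph.IsTree

/-- Deligne–Mumford stability. -/
def Stable : Prop := ∀ v, 0 < 2 * (C.w v : ℤ) - 2 + ∑ n, (C.endsIn {v} n : ℤ)

/-- A tail: a subcurve meeting its complement in exactly one node. -/
def isTail (S : Finset C.V) : Prop := C.k S = 1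

/-- The degree `d_Y` of a multidegree `e` on the subcurve with components `S`. -/
def degSub (e : C.V → ℤ) (S : Finset C.V) : ℤ := ∑ v ∈ S, e v

/-- The total degree of a multidegree. -/
def totalDeg (e : C.V → ℤ) : ℤ := ∑ v, e v

/-- Semistability (w.r.t. the canonical polarization) at the subcurve `S`:
`|d_Y - d·deg(ω_C|_Y)/(2g-2)| ≤ k_Y/2`. -/
def semistableAt (e : C.V → ℤ) (S : Finset C.V) : Prop :=
  |(C.degSub e S : ℚ) - (C.totalDeg e : ℚ) * (C.degω S : ℚ) / (2 * (C.genus : ℚ) - 2)|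
    ≤ (C.k S : ℚ) / 2

/-- The strict lower inequality of quasistability at the subcurve `S`:
`d_Y - d·deg(ω_C|_Y)/(2g-2) > -k_Y/2`. -/
def quasistableLowAt (e : C.V → ℤ) (S : Finset C.V) : Prop :=
  -((C.k S : ℚ) / 2) <
    (C.degSub e S : ℚ) - (C.totalDeg e : ℚ) * (C.degω S : ℚ) / (2 * (C.genus : ℚ) - 2)

/-- A semistable multidegree. -/
def semistable (e : C.V → ℤ) : Prop :=
  ∀ S : Finset C.V, S.Nonempty → S ≠ univ → C.semistableAt e S

/-- An `X`-quasistable multidegree. -/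
def Xquasistable (X : C.V) (e : C.V → ℤ) : Prop :=
  C.semistable e ∧
    ∀ S : Finset C.V, S.Nonempty → S ≠ univ → X ∈ S → C.quasistableLowAt e S

/-- A `d̄`-big tail: `d_Z·deg(ω_C) - d·deg(ω_C|_Z) < 2g_Z - g`. -/
def isBigTail (e : C.V → ℤ) (S : Finset C.V) : Prop :=
  C.isTail S ∧
    C.degSub e S * (2 * C.genus - 2) - C.totalDeg e * C.degω S
      < 2 * C.genusSub S - C.genus

/-- `S` is (the set of components of) a connected component of the complement `X'`
of the irreducible component `x`. -/
def complComponent (x : C.V) (S : Finset C.V) : Prop :=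
  x ∉ S ∧ S.Nonempty ∧ C.connectedSub S ∧
    ∀ u ∈ S, ∀ v : C.V, C.graph.Adj u v → v ≠ x → v ∈ S

/-- `T` is (the set of components of) a connected component of the subcurve `S`. -/
def subComponent (S T : Finset C.V) : Prop :=
  T ⊆ S ∧ T.Nonempty ∧ C.connectedSub T ∧
    ∀ u ∈ T, ∀ v ∈ S, C.graph.Adj u v → v ∈ T

/-- A central component: every connected component `Z` of `X'` has `g_Z < g/2`. -/
def central (x : C.V) : Prop :=
  ∀ S : Finset C.V, C.complComponent x S → 2 * C.genusSub S < C.genus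

/-- A semicentral component: every connected component `Z` of `X'` has `g_Z ≤ g/2`. -/
def semicentral (x : C.V) : Prop :=
  ∀ S : Finset C.V, C.complComponent x S → 2 * C.genusSub S ≤ C.genus

end NodalCurve


section Aux

variable {V : Type} {G : SimpleGraph V}

/-- A walk whose support lies in `s` gives reachability in the induced graph. -/
lemma reach_induce {s : Set V} {u v : V} (p : G.Walk u v)
    (h : ∀ w ∈ p.support, w ∈ s) (hu : u ∈ s) (hv : v ∈ s) :
    (G.induce s).Reachable ⟨u, hu⟩ ⟨v, hv⟩ := by
  induction p with
  | nil => exact SimpleGraph.Reachable.refl _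
  | @cons a b c hab p ih =>
      have hb : b ∈ s := h b (by simp)
      have h1 : (G.induce s).Adj ⟨a, hu⟩ ⟨b, hb⟩ := by
        simpa using hab
      exact h1.reachable.trans (ih (fun w hw => h w (by simp [hw])) hb hv)

lemma acyclic_induce (hG : G.IsAcyclic) (s : Set V) : (G.induce s).IsAcyclic := by
  intro v p hp
  exact hG _ ((SimpleGraph.Walk.map_isCycle_iff_of_injective
    (f := (SimpleGraph.Embedding.induce s).toHom) Subtype.val_injective).2 hp)

end Aux

namespace NodalCurve

variable (C : NodalCurve)

lemma adj_exists_node {u v : C.V} (h : C.graph.Adj u v) : ∃ n, C.ends n = s(u, v) := by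
  rw [NodalCurve.graph, SimpleGraph.fromRel_adj] at h
  rcases h.2 with ⟨n, hn⟩ | ⟨n, hn⟩
  · exact ⟨n, hn⟩
  · exact ⟨n, by rw [hn, Sym2.eq_swap]⟩

lemma ends_mem_edgeSet (hct : C.CompactType) (n : C.N) : C.ends n ∈ C.graph.edgeSet := by
  have key : ∀ e, C.ends n = e → e ∈ C.graph.edgeSet := by
    refine Sym2.ind ?_
    intro a b h
    rw [SimpleGraph.mem_edgeSet]
    have hne : a ≠ b := by
      have := hct.2.1 n
      rw [h, Sym2.mk_isDiag_iff] at this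
      exact this
    rw [NodalCurve.graph, SimpleGraph.fromRel_adj]
    exact ⟨hne, Or.inl ⟨n, h⟩⟩
  exact key _ rfl

lemma card_nodes_lt (hct : C.CompactType) :
    Fintype.card C.N + 1 ≤ Fintype.card C.V := by
  classical
  have hFE : Fintype C.graph.edgeSet := Fintype.ofFinite _
  have hinj : Function.Injective (fun n => (⟨C.ends n, C.ends_mem_edgeSet hct n⟩ :
      C.graph.edgeSet)) := by
    intro a b hab
    exact hct.1 (by simpa using congrArg Subtype.val hab)
  have h1 : Fintype.card C.N ≤ Fintype.card C.graph.edgeSet :=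
    Fintype.card_le_of_injective _ hinj
  have h2 : C.graph.edgeFinset.card + 1 = Fintype.card C.V :=
    hct.2.2.card_edgeFinset
  have h3 : Fintype.card C.graph.edgeSet = C.graph.edgeFinset.card :=
    (Set.toFinset_card _).symm
  omega

lemma endsIn_eq {S : Finset C.V} {n : C.N} {a b : C.V} (h : C.ends n = s(a, b)) :
    C.endsIn S n = (if a ∈ S then 1 else 0) + (if b ∈ S then 1 else 0) := by
  rw [NodalCurve.endsIn, h, Sym2.lift_mk]

/-- A connected subcurve has at least `card - 1` internal nodes. -/
lemma card_le_internalNodes (hct : C.CompactType) {S : Finset C.V}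
    (hS : C.connectedSub S) : S.card ≤ C.internalNodes S + 1 := by
  classical
  set H := C.graph.induce (S : Set C.V) with hH
  have hFE : Fintype H.edgeSet := Fintype.ofFinite _
  have htree : H.IsTree := ⟨hS, acyclic_induce hct.2.2.2 _⟩
  have hcard : H.edgeFinset.card + 1 = S.card := by
    have := htree.card_edgeFinset
    simpa using this
  -- injection from edges of H to internal nodes
  have key : ∀ e ∈ H.edgeSet, ∃ n, C.ends n = Sym2.map Subtype.val e ∧ C.endsIn S n = 2 := by
    refine Sym2.ind ?_
    intro a b he
    rw [SimpleGraph.mem_edgeSet] at he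
    have hadj : C.graph.Adj a.1 b.1 := by simpa [hH] using he
    obtain ⟨n, hn⟩ := C.adj_exists_node hadj
    refine ⟨n, by rw [hn, Sym2.map_pair_eq], ?_⟩
    rw [C.endsIn_eq hn, if_pos (by exact_mod_cast a.2), if_pos (by exact_mod_cast b.2)]
  have h1 : Fintype.card H.edgeSet ≤ Fintype.card {n // C.endsIn S n = 2} := by
    refine Fintype.card_le_of_injective
      (fun e => ⟨(key e.1 e.2).choose, (key e.1 e.2).choose_spec.2⟩) ?_
    intro e f hef
    have h2 := (key e.1 e.2).choose_spec.1
    have h3 := (key f.1 f.2).choose_spec.1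
    have : Sym2.map Subtype.val e.1 = Sym2.map Subtype.val f.1 := by
      rw [← h2, ← h3]
      exact congrArg C.ends (congrArg Subtype.val hef)
    exact Subtype.ext (Sym2.map.injective Subtype.val_injective this)
  have h4 : Fintype.card {n // C.endsIn S n = 2} = C.internalNodes S := by
    rw [NodalCurve.internalNodes]
    simp [Fintype.card_subtype]
  have h5 : Fintype.card H.edgeSet = H.edgeFinset.card := (Set.toFinset_card _).symm
  omega

lemma complComponent_of {x y : C.V} (hxy : y ≠ x) (S : Finset C.V)
    (hmem : ∀ v, v ∈ S ↔ ∃ p : C.graph.Walk y v, x ∉ p.support) :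
    C.complComponent x S := by
  have hyS : y ∈ S := (hmem y).2 ⟨SimpleGraph.Walk.nil, by simp [hxy.symm]⟩
  refine ⟨?_, ⟨y, hyS⟩, ?_, ?_⟩
  · intro hxS
    obtain ⟨p, hp⟩ := (hmem x).1 hxS
    exact hp p.end_mem_support
  · show (C.graph.induce (S : Set C.V)).Connected
    haveI : Nonempty ↥(S : Set C.V) := ⟨⟨y, by simpa using hyS⟩⟩
    refine ⟨?_⟩
    have key : ∀ (v : C.V) (hv : v ∈ S),
        (C.graph.induce (S : Set C.V)).Reachable ⟨y, by simpa using hyS⟩ ⟨v, by simpa using hv⟩ := by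
      intro v hv
      obtain ⟨p, hp⟩ := (hmem v).1 hv
      refine reach_induce p ?_ (by simpa using hyS) (by simpa using hv)
      intro w hw
      have : w ∈ S := (hmem w).2 ⟨p.takeUntil w hw,
        fun hc => hp (p.support_takeUntil_subset hw hc)⟩
      simpa using this
    rintro ⟨u, hu⟩ ⟨v, hv⟩
    exact (key u (by simpa using hu)).symm.trans (key v (by simpa using hv))
  · intro u hu v hadj hvx
    obtain ⟨p, hp⟩ := (hmem u).1 hu
    refine (hmem v).2 ⟨p.concat hadj, ?_⟩
    rw [SimpleGraph.Walk.support_concat]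
    intro hc
    rcases (by simpa using hc : x ∈ p.support ∨ x = v) with h | h
    · exact hp h
    · exact hvx h.symm

lemma cover_walk (hconn : C.Conn) {x y : C.V} (hxy : x ≠ y) (v : C.V) :
    (∃ p : C.graph.Walk y v, x ∉ p.support) ∨ (∃ p : C.graph.Walk x v, y ∉ p.support) := by
  have hconn' : C.graph.Connected := hconn
  obtain ⟨p⟩ := hconn'.preconnected y v
  have hq : p.bypass.IsPath := p.bypass_isPath
  set q := p.bypass with hqdef
  by_cases hx : x ∈ q.support
  · right
    refine ⟨q.dropUntil x hx, fun hy => ?_⟩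
    have hnd := hq.support_nodup
    rw [← q.take_spec hx, SimpleGraph.Walk.support_append] at hnd
    have h1 : y ∈ (q.takeUntil x hx).support := SimpleGraph.Walk.start_mem_support _
    have h2 : y ∈ (q.dropUntil x hx).support.tail := by
      rw [SimpleGraph.Walk.support_eq_cons (q.dropUntil x hx)] at hy
      rcases List.mem_cons.mp hy with h | h
      · exact absurd h.symm hxy
      · exact h
    exact (List.disjoint_of_nodup_append hnd) h1 h2
  · exact Or.inl ⟨q, hx⟩

end NodalCurve

/-- A stable curve of compact type has at most one central component. -/
theorem at_most_one_central_component (C : NodalCurve) (hconn : C.Conn)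
    (hct : C.CompactType) (hst : C.Stable) :
    ∀ x y : C.V, C.central x → C.central y → x = y := by
  classical
  intro x y hcx hcy
  by_contra hxy
  set Sy : Finset C.V := univ.filter fun v => ∃ p : C.graph.Walk y v, x ∉ p.support with hSy
  set Sx : Finset C.V := univ.filter fun v => ∃ p : C.graph.Walk x v, y ∉ p.support with hSx
  have memSy : ∀ v, v ∈ Sy ↔ ∃ p : C.graph.Walk y v, x ∉ p.support := fun v => by
    simp [hSy]
  have memSx : ∀ v, v ∈ Sx ↔ ∃ p : C.graph.Walk x v, y ∉ p.support := fun v => by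
    simp [hSx]
  have hcompY := C.complComponent_of (fun h => hxy h.symm) Sy memSy
  have hcompX := C.complComponent_of (fun h : x = y => hxy h) Sx memSx
  have h1 := hcx Sy hcompY
  have h2 := hcy Sx hcompX
  have hcov : Sx ∪ Sy = univ := by
    ext v
    simp only [mem_union, mem_univ, iff_true]
    rcases C.cover_walk hconn hxy v with h | h
    · exact Or.inr ((memSy v).2 h)
    · exact Or.inl ((memSx v).2 h)
  have hbY : (Sy.card : ℤ) ≤ (C.internalNodes Sy : ℤ) + 1 := by
    exact_mod_cast C.card_le_internalNodes hct hcompY.2.2.1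
  have hbX : (Sx.card : ℤ) ≤ (C.internalNodes Sx : ℤ) + 1 := by
    exact_mod_cast C.card_le_internalNodes hct hcompX.2.2.1
  have hgY : ∑ v ∈ Sy, (C.w v : ℤ) ≤ C.genusSub Sy := by
    rw [NodalCurve.genusSub]; linarith
  have hgX : ∑ v ∈ Sx, (C.w v : ℤ) ≤ C.genusSub Sx := by
    rw [NodalCurve.genusSub]; linarith
  have hN : (Fintype.card C.N : ℤ) + 1 ≤ (Fintype.card C.V : ℤ) := by
    exact_mod_cast C.card_nodes_lt hct
  have hg : C.genus ≤ ∑ v, (C.w v : ℤ) := by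
    rw [NodalCurve.genus]; linarith
  have hsum : ∑ v, (C.w v : ℤ) ≤ ∑ v ∈ Sx, (C.w v : ℤ) + ∑ v ∈ Sy, (C.w v : ℤ) := by
    have h := Finset.sum_union_inter (s₁ := Sx) (s₂ := Sy) (f := fun v => (C.w v : ℤ))
    have hnn : 0 ≤ ∑ v ∈ Sx ∩ Sy, (C.w v : ℤ) :=
      Finset.sum_nonneg fun _ _ => by positivity
    rw [hcov] at h
    linarith
  linarith
end

section
/- Let C be a nodal curve of genus g with irreducible components X_1,…,X_γ, and let L be a line bundle of total degree d on C. Then L is semistable with respect to the canonical polarization E_d if and only if for every nonempty proper subcurve Y of C one has |deg(L|_Y) − (d/(2g−2))·deg(ω_C|_Y)| ≤ k_Y/2. -/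
open Finset

namespace NodalCurve
variable (C : NodalCurve)

lemma endsIn_add_compl (S : Finset C.V) (n : C.N) :
    C.endsIn S n + C.endsIn Sᶜ n = 2 := by
  unfold endsIn
  induction C.ends n using Sym2.ind with
  | _ a b =>
    by_cases ha : a ∈ S <;> by_cases hb : b ∈ S <;>
      simp [Sym2.lift_mk, Finset.mem_compl, ha, hb]

lemma sum_endsIn (S : Finset C.V) :
    ∑ n, C.endsIn S n = C.k S + 2 * C.internalNodes S := by
  unfold k internalNodes
  rw [Finset.card_filter, Finset.card_filter, Finset.mul_sum, ← Finset.sum_add_distrib]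
  refine Finset.sum_congr rfl fun n _ => ?_
  have h := C.endsIn_add_compl S n
  split_ifs <;> omega

lemma k_compl (S : Finset C.V) : C.k Sᶜ = C.k S := by
  unfold k
  congr 1
  apply Finset.filter_congr
  intro n _
  have := C.endsIn_add_compl S n
  omega

lemma degω_eq (S : Finset C.V) : C.degω S = (C.k S : ℤ) - 2 * C.chiO S := by
  unfold degω chiO
  have h : ((∑ n, C.endsIn S n : ℕ) : ℤ) = (C.k S : ℤ) + 2 * C.internalNodes S := by
    rw [C.sum_endsIn S]; push_cast; ring
  push_cast at h
  have h1 : ∑ v ∈ S, (2 * (C.w v : ℤ) - 2) = 2 * ∑ v ∈ S, (C.w v : ℤ) - 2 * S.card := by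
    rw [Finset.sum_sub_distrib, ← Finset.mul_sum, Finset.sum_const]
    ring
  rw [h1]
  linarith [h]

lemma degω_compl (S : Finset C.V) : C.degω Sᶜ = (2 * C.genus - 2) - C.degω S := by
  unfold degω genus
  have h1 := Finset.sum_add_sum_compl S (fun v => 2 * (C.w v : ℤ) - 2)
  have h2 : ∑ n, (C.endsIn Sᶜ n : ℤ) + ∑ n, (C.endsIn S n : ℤ)
      = 2 * Fintype.card C.N := by
    rw [← Finset.sum_add_distrib]
    have h' : ∀ n ∈ (univ : Finset C.N), (C.endsIn Sᶜ n : ℤ) + (C.endsIn S n : ℤ) = 2 := by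
      intro n _
      have := C.endsIn_add_compl S n
      omega
    rw [Finset.sum_congr rfl h', Finset.sum_const, Finset.card_univ]
    ring
  have h3 : ∑ v ∈ (univ : Finset C.V), (2 * (C.w v : ℤ) - 2)
      = 2 * ∑ v, (C.w v : ℤ) - 2 * Fintype.card C.V := by
    rw [Finset.sum_sub_distrib, ← Finset.mul_sum, Finset.sum_const, Finset.card_univ]
    ring
  linarith [h1, h2, h3]

lemma degSub_compl (e : C.V → ℤ) (S : Finset C.V) :
    C.degSub e Sᶜ = C.totalDeg e - C.degSub e S := by
  unfold degSub totalDeg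
  have := Finset.sum_add_sum_compl S e
  linarith

end NodalCurve

lemma semistable_aux_iff (g k ω d ds : ℚ) (hG : 0 < 2*g - 2) :
    (-((g - 1 - d) * ω) / (2*g-2) ≤ (k - ω)/2 + ds) ↔ (-(k/2) ≤ ds - d * ω / (2*g-2)) := by
  rw [div_le_iff₀ hG,
    show ds - d*ω/(2*g-2) = (ds*(2*g-2) - d*ω)/(2*g-2) from by rw [sub_div, mul_div_cancel_right₀ _ (ne_of_gt hG)],
    le_div_iff₀ hG]
  constructor <;> intro h <;> nlinarith [h]

open Finset in
/-- a line bundle `L` (of multidegree `e`, total degree `d`) is semistable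
with respect to the canonical polarization `E_d` (i.e. `χ(L|_Y) ≥ -deg(E_d|_Y)/rank E_d`
for every nonempty proper subcurve `Y`) iff
`|deg(L|_Y) - (d/(2g-2))·deg(ω_C|_Y)| ≤ k_Y/2` for every nonempty proper subcurve `Y`. -/
theorem semistable_iff_basic_inequality (C : NodalCurve) (hconn : C.Conn)
    (hg : 2 ≤ C.genus) (e : C.V → ℤ) :
    (∀ S : Finset C.V, S.Nonempty → S ≠ univ →
        (if C.totalDeg e = C.genus - 1 then (0 : ℚ)
          else -(((C.genus - 1 - C.totalDeg e) * C.degω S : ℤ) : ℚ)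
              / (2 * (C.genus : ℚ) - 2))
          ≤ ((C.chiO S + C.degSub e S : ℤ) : ℚ)) ↔
      (∀ S : Finset C.V, S.Nonempty → S ≠ univ → C.semistableAt e S) := by
  have hg2 : (2:ℚ) ≤ (C.genus : ℚ) := by exact_mod_cast hg
  have hGQ : (0:ℚ) < 2 * (C.genus : ℚ) - 2 := by linarith
  have hGne : (2 * (C.genus : ℚ) - 2) ≠ 0 := ne_of_gt hGQ
  have key : ∀ S : Finset C.V,
      ((if C.totalDeg e = C.genus - 1 then (0 : ℚ)
          else -(((C.genus - 1 - C.totalDeg e) * C.degω S : ℤ) : ℚ)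
              / (2 * (C.genus : ℚ) - 2))
          ≤ ((C.chiO S + C.degSub e S : ℤ) : ℚ)) ↔
      (-((C.k S : ℚ)/2) ≤ (C.degSub e S : ℚ)
          - (C.totalDeg e : ℚ) * (C.degω S : ℚ) / (2 * (C.genus : ℚ) - 2)) := by
    intro S
    have hB : (if C.totalDeg e = C.genus - 1 then (0 : ℚ)
          else -(((C.genus - 1 - C.totalDeg e) * C.degω S : ℤ) : ℚ)
              / (2 * (C.genus : ℚ) - 2))
        = -(((C.genus : ℚ) - 1 - (C.totalDeg e : ℚ)) * (C.degω S : ℚ))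
            / (2 * (C.genus : ℚ) - 2) := by
      by_cases h : C.totalDeg e = C.genus - 1
      · rw [if_pos h]
        have h0 : ((C.genus : ℚ) - 1 - (C.totalDeg e : ℚ)) = 0 := by
          rw [h]; push_cast; ring
        rw [h0, zero_mul, neg_zero, zero_div]
      · rw [if_neg h]; push_cast; ring
    have hchi : ((C.chiO S + C.degSub e S : ℤ) : ℚ)
        = ((C.k S : ℚ) - (C.degω S : ℚ))/2 + (C.degSub e S : ℚ) := by
      have h := C.degω_eq S
      have h' : (C.degω S : ℚ) = (C.k S : ℚ) - 2 * (C.chiO S : ℚ) := by exact_mod_cast h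
      push_cast
      linarith
    rw [hB, hchi]
    exact semistable_aux_iff _ _ _ _ _ hGQ
  constructor
  · intro h S hS hSu
    have hSc_ne : Sᶜ ≠ univ := by
      obtain ⟨x, hx⟩ := hS
      intro hc
      exact (Finset.mem_compl.mp (hc ▸ Finset.mem_univ x)) hx
    have hSc_nonempty : Sᶜ.Nonempty := by
      have hall : ¬ (∀ x, x ∈ S) := fun hall => hSu (Finset.eq_univ_iff_forall.mpr hall)
      push_neg at hall
      obtain ⟨x, hx⟩ := hall
      exact ⟨x, Finset.mem_compl.mpr hx⟩
    have h1 := (key S).mp (h S hS hSu)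
    have h2 := (key Sᶜ).mp (h Sᶜ hSc_nonempty hSc_ne)
    rw [C.k_compl, C.degω_compl, C.degSub_compl] at h2
    unfold NodalCurve.semistableAt
    rw [abs_le]
    refine ⟨by linarith [h1], ?_⟩
    have hsimp : (C.totalDeg e : ℚ) * (2 * (C.genus : ℚ) - 2 - (C.degω S : ℚ))
        / (2 * (C.genus : ℚ) - 2)
        = (C.totalDeg e : ℚ)
          - (C.totalDeg e : ℚ) * (C.degω S : ℚ) / (2 * (C.genus : ℚ) - 2) := by
      rw [mul_sub, sub_div, mul_div_cancel_right₀ _ hGne]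
    push_cast at h2
    linarith [h2, hsimp]
  · intro h S hS hSu
    have habs := h S hS hSu
    unfold NodalCurve.semistableAt at habs
    rw [abs_le] at habs
    exact (key S).mpr (by linarith [habs.1])
end
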